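/- Identifiability under the Vandermonde-constrained CP condition: suppose 𝒴 = Σ_{k=1}^K a_k ∘ b_k ∘ c_k where C = [c₁ ⋯ c_K] is Vandermonde with pairwise distinct unit-modulus generators, rank(C̲ ⊙ B) = K, and rank(A) = K. Then any alternative decomposition 𝒴 = Σ_{k=1}^K a'_k ∘ b'_k ∘ c'_k with C' Vandermonde (distinct generators, same constraints) satisfies: there exists a permutation π and scalars with a'_k ∘ b'_k ∘ c'_k = a_{π(k)} ∘ b_{π(k)} ∘ c_{π(k)} for all k; in particular the set of generators of C' equals that of C. -/

import Mathlib

open Matrix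

lemma vcp_aux_inj {n : Type*} [Fintype n] {K : ℕ} (X : Matrix n (Fin K) ℂ)
    (h : X.rank = K) : Function.Injective X.mulVec := by
  have hrk : Module.finrank ℂ (LinearMap.range X.mulVecLin) = K := h
  have hrn := X.mulVecLin.finrank_range_add_finrank_ker
  rw [hrk, Module.finrank_fin_fun] at hrn
  have hker : LinearMap.ker X.mulVecLin = ⊥ :=
    Submodule.finrank_eq_zero.mp (by omega)
  have hinj : Function.Injective X.mulVecLin := LinearMap.ker_eq_bot.mp hker
  exact hinj

lemma vcp_aux_surj {n : Type*} [Fintype n] {K : ℕ} (X : Matrix (Fin K) n ℂ)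
    (h : X.rank = K) : Function.Surjective X.mulVec := by
  have hrk : Module.finrank ℂ (LinearMap.range X.mulVecLin) = K := h
  have hr : LinearMap.range X.mulVecLin = ⊤ :=
    Submodule.eq_top_of_finrank_eq (by rw [hrk, Module.finrank_fin_fun])
  have hsurj : Function.Surjective X.mulVecLin := LinearMap.range_eq_top.mp hr
  exact hsurj

theorem vandermonde_CP_uniqueness {P M L K : ℕ}
    (A : Matrix (Fin P) (Fin K) ℂ) (B : Matrix (Fin M) (Fin K) ℂ)
    (t : Fin K → ℂ) (ht1 : ∀ k, ‖t k‖ = 1)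
    (htdist : ∀ k₁ k₂ : Fin K, k₁ ≠ k₂ → t k₁ ≠ t k₂)
    (C : Matrix (Fin L) (Fin K) ℂ) (hC : ∀ l k, C l k = t k ^ ((l : ℕ) + 1))
    (hKR : Matrix.rank (Matrix.of fun (p : Fin (L - 1) × Fin M) (k : Fin K) =>
      t k ^ ((p.1 : ℕ) + 1) * B p.2 k) = K)
    (hA : A.rank = K)
    (A' : Matrix (Fin P) (Fin K) ℂ) (B' : Matrix (Fin M) (Fin K) ℂ)
    (t' : Fin K → ℂ) (ht1' : ∀ k, ‖t' k‖ = 1)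
    (htdist' : ∀ k₁ k₂ : Fin K, k₁ ≠ k₂ → t' k₁ ≠ t' k₂)
    (C' : Matrix (Fin L) (Fin K) ℂ) (hC' : ∀ l k, C' l k = t' k ^ ((l : ℕ) + 1))
    (hKR' : Matrix.rank (Matrix.of fun (p : Fin (L - 1) × Fin M) (k : Fin K) =>
      t' k ^ ((p.1 : ℕ) + 1) * B' p.2 k) = K)
    (hA' : A'.rank = K)
    (heq : ∀ (p : Fin P) (m : Fin M) (l : Fin L),
      ∑ k : Fin K, A p k * B m k * C l k = ∑ k : Fin K, A' p k * B' m k * C' l k) :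
    (∃ π : Equiv.Perm (Fin K), ∀ (k : Fin K) (p : Fin P) (m : Fin M) (l : Fin L),
      A' p k * B' m k * C' l k = A p (π k) * B m (π k) * C l (π k)) ∧
    Set.range t' = Set.range t := by
  classical
  -- the full Khatri-Rao matrices
  set U : Matrix (Fin L × Fin M) (Fin K) ℂ :=
    Matrix.of fun p k => t k ^ ((p.1 : ℕ) + 1) * B p.2 k with hU
  set U' : Matrix (Fin L × Fin M) (Fin K) ℂ :=
    Matrix.of fun p k => t' k ^ ((p.1 : ℕ) + 1) * B' p.2 k with hU'
  set Ud : Matrix (Fin (L - 1) × Fin M) (Fin K) ℂ :=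
    Matrix.of fun p k => t k ^ ((p.1 : ℕ) + 1) * B p.2 k with hUd
  set Ud' : Matrix (Fin (L - 1) × Fin M) (Fin K) ℂ :=
    Matrix.of fun p k => t' k ^ ((p.1 : ℕ) + 1) * B' p.2 k with hUd'
  have hUdinj : Function.Injective Ud.mulVec := vcp_aux_inj _ hKR
  have hUdinj' : Function.Injective Ud'.mulVec := vcp_aux_inj _ hKR'
  -- row embeddings
  have hlt0 : ∀ l : Fin (L - 1), (l : ℕ) < L := fun l => by have := l.isLt; omega
  have hlt1 : ∀ l : Fin (L - 1), (l : ℕ) + 1 < L := fun l => by have := l.isLt; omega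
  set e0 : Fin (L - 1) → Fin L := fun l => ⟨l, hlt0 l⟩ with he0
  set e1 : Fin (L - 1) → Fin L := fun l => ⟨(l : ℕ) + 1, hlt1 l⟩ with he1
  -- U has full column rank (its mulVec is injective)
  have hUinj : Function.Injective U.mulVec := by
    intro v w hvw
    apply hUdinj
    ext lm
    have h := congrFun hvw (e0 lm.1, lm.2)
    simpa [Matrix.mulVec, dotProduct, hU, hUd, he0] using h
  -- the slice equation in matrix form
  have hY : U * Aᵀ = U' * A'ᵀ := by
    ext lm p
    simp only [Matrix.mul_apply, hU, hU', Matrix.of_apply, Matrix.transpose_apply]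
    calc ∑ k, t k ^ ((lm.1 : ℕ) + 1) * B lm.2 k * A p k
        = ∑ k, A p k * B lm.2 k * C lm.1 k := by
          refine Finset.sum_congr rfl fun k _ => ?_; rw [hC]; ring
      _ = ∑ k, A' p k * B' lm.2 k * C' lm.1 k := heq p lm.2 lm.1
      _ = ∑ k, t' k ^ ((lm.1 : ℕ) + 1) * B' lm.2 k * A' p k := by
          refine Finset.sum_congr rfl fun k _ => ?_; rw [hC']; ring
  -- transfer matrix columns
  have hsurj : Function.Surjective A'ᵀ.mulVec :=
    vcp_aux_surj A'ᵀ (by rw [Matrix.rank_transpose]; exact hA')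
  choose x hx using fun k => hsurj (Pi.single k (1 : ℂ))
  set mk : Fin K → Fin K → ℂ := fun k => Aᵀ.mulVec (x k) with hmk
  have hcol : ∀ k, U.mulVec (mk k) = fun lm => U' lm k := by
    intro k
    show U *ᵥ (Aᵀ *ᵥ x k) = _
    rw [Matrix.mulVec_mulVec, hY, ← Matrix.mulVec_mulVec, hx, Matrix.mulVec_single]
    simp
    rfl
  -- the shift relation kills cross terms
  have hzero : ∀ k j, t j ≠ t' k → mk k j = 0 := by
    intro k j hne
    have hsh : (fun j => t j * mk k j) = (fun j => t' k * mk k j) := by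
      apply hUdinj
      ext lm
      have h1 := congrFun (hcol k) (e1 lm.1, lm.2)
      have h2 := congrFun (hcol k) (e0 lm.1, lm.2)
      simp only [Matrix.mulVec, dotProduct, hU, hU', Matrix.of_apply, he0, he1] at h1 h2
      simp only [Matrix.mulVec, dotProduct, hUd, Matrix.of_apply]
      calc ∑ j, t j ^ ((lm.1 : ℕ) + 1) * B lm.2 j * (t j * mk k j)
          = ∑ j, t j ^ ((lm.1 : ℕ) + 1 + 1) * B lm.2 j * mk k j := by
            refine Finset.sum_congr rfl fun j _ => ?_; ring
        _ = t' k ^ ((lm.1 : ℕ) + 1 + 1) * B' lm.2 k := h1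
        _ = t' k * (t' k ^ ((lm.1 : ℕ) + 1) * B' lm.2 k) := by ring
        _ = t' k * ∑ j, t j ^ ((lm.1 : ℕ) + 1) * B lm.2 j * mk k j := by rw [h2]
        _ = ∑ j, t j ^ ((lm.1 : ℕ) + 1) * B lm.2 j * (t' k * mk k j) := by
            rw [Finset.mul_sum]; refine Finset.sum_congr rfl fun j _ => ?_; ring
    have := congrFun hsh j
    have hsub : mk k j * (t j - t' k) = 0 := by ring_nf; linear_combination this
    rcases mul_eq_zero.mp hsub with h | h
    · exact h
    · exact absurd (sub_eq_zero.mp h) hne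
  -- each transfer column is nonzero
  have hmkne : ∀ k, ∃ j, mk k j ≠ 0 := by
    intro k
    by_contra hall
    push_neg at hall
    have hmk0 : mk k = 0 := funext fun j => hall j
    have hcol0 : (fun lm : Fin L × Fin M => U' lm k) = 0 := by
      rw [← hcol k, hmk0, Matrix.mulVec_zero]
    have : Ud'.mulVec (Pi.single k 1) = Ud'.mulVec 0 := by
      rw [Matrix.mulVec_single, Matrix.mulVec_zero]
      ext lm
      have := congrFun hcol0 (e0 lm.1, lm.2)
      simp only [hU', Matrix.of_apply, he0, Pi.zero_apply] at this
      simpa [hUd'] using this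
    have h1 := congrFun (hUdinj' this) k
    simp at h1
  -- the permutation
  have hπ : ∀ k, ∃ j, mk k j ≠ 0 ∧ t j = t' k := by
    intro k
    obtain ⟨j, hj⟩ := hmkne k
    exact ⟨j, hj, by by_contra hne; exact hj (hzero k j hne)⟩
  choose π₀ hπ₀ne hπ₀t using hπ
  have hmkzero : ∀ k j, j ≠ π₀ k → mk k j = 0 := by
    intro k j hne
    by_contra h
    have ht : t j = t' k := by by_contra hne'; exact h (hzero k j hne')
    have : t j = t (π₀ k) := by rw [ht, hπ₀t k]
    by_cases hj : j = π₀ k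
    · exact hne hj
    · exact htdist j (π₀ k) hj this
  have hπinj : Function.Injective π₀ := by
    intro k₁ k₂ h
    by_contra hne
    exact htdist' k₁ k₂ hne (by rw [← hπ₀t k₁, ← hπ₀t k₂, h])
  have hπbij : Function.Bijective π₀ := Finite.injective_iff_bijective.mp hπinj
  -- column relation
  have hBC : ∀ k lm, U' lm k = U lm (π₀ k) * mk k (π₀ k) := by
    intro k lm
    have h := congrFun (hcol k) lm
    rw [← h]
    simp only [Matrix.mulVec, dotProduct]
    rw [Finset.sum_eq_single (π₀ k)]
    · intro j _ hj; rw [hmkzero k j hj, mul_zero]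
    · intro h; exact absurd (Finset.mem_univ _) h
  -- A relation
  have hArel : ∀ p k, A p (π₀ k) = A' p k * mk k (π₀ k) := by
    intro p k₀
    have hrow : U.mulVec (fun k => A p k) = U'.mulVec (fun k => A' p k) := by
      have := congrArg (fun X => Matrix.mulVec X (Pi.single p (1 : ℂ))) hY
      simp only [← Matrix.mulVec_mulVec, Matrix.mulVec_single, Matrix.transpose_apply,
        mul_one] at this
      simp only [MulOpposite.op_one, one_smul] at this
      ext lm
      have h := congrFun this lm
      simpa [Matrix.col, Matrix.mul_apply, Matrix.mulVec, dotProduct,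
        Matrix.transpose_apply] using h
    have hrw : U'.mulVec (fun k => A' p k) = U.mulVec (fun j => ∑ k, A' p k * mk k j) := by
      ext lm
      simp only [Matrix.mulVec, dotProduct]
      calc ∑ k, U' lm k * A' p k
          = ∑ k, (U lm (π₀ k) * mk k (π₀ k)) * A' p k := by
            refine Finset.sum_congr rfl fun k _ => ?_; rw [hBC]
        _ = ∑ k, ∑ j, U lm j * mk k j * A' p k := by
            refine Finset.sum_congr rfl fun k _ => ?_
            rw [Finset.sum_eq_single (π₀ k)]
            · intro j _ hj; rw [hmkzero k j hj, mul_zero, zero_mul]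
            · intro h; exact absurd (Finset.mem_univ _) h
        _ = ∑ j, U lm j * ∑ k, A' p k * mk k j := by
            rw [Finset.sum_comm]
            refine Finset.sum_congr rfl fun j _ => ?_
            rw [Finset.mul_sum]
            refine Finset.sum_congr rfl fun k _ => ?_; ring
    have h := hUinj (hrow.trans hrw)
    have h2 := congrFun h (π₀ k₀)
    rw [h2, Finset.sum_eq_single k₀]
    · intro k _ hk
      rw [hmkzero k (π₀ k₀) (fun hc => hk (hπinj hc).symm), mul_zero]
    · intro h; exact absurd (Finset.mem_univ _) h
  refine ⟨⟨Equiv.ofBijective π₀ hπbij, ?_⟩, ?_⟩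
  · intro k p m l
    simp only [Equiv.ofBijective_apply]
    have h1 := hBC k (l, m)
    simp only [hU, hU', Matrix.of_apply] at h1
    rw [hC', hC, hArel p k]
    calc A' p k * B' m k * (t' k ^ ((l : ℕ) + 1))
        = A' p k * (t' k ^ ((l : ℕ) + 1) * B' m k) := by ring
      _ = A' p k * (t (π₀ k) ^ ((l : ℕ) + 1) * B m (π₀ k) * mk k (π₀ k)) := by rw [h1]
      _ = A' p k * mk k (π₀ k) * B m (π₀ k) * t (π₀ k) ^ ((l : ℕ) + 1) := by ring
  · have : t' = t ∘ π₀ := funext fun k => (hπ₀t k).symm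
    rw [this, Set.range_comp, hπbij.2.range_eq, Set.image_univ]
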